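/- For r ∈ (0,∞), the supremum of |z^k| = |z₁|^{k₁}⋯|zₙ|^{kₙ} over the open Euclidean ball {z ∈ ℂⁿ : Σᵢ |zᵢ|² < r²} equals (k^k/|k|^{|k|})^{1/2} · r^{|k|}. -/

import Mathlib

open Finset

private lemma key_amgm {n : ℕ} (k : Fin n → ℕ) (t : Fin n → ℝ) (ht : ∀ i, 0 ≤ t i)
    {S : ℝ} (hS : 0 ≤ S) (hsum : ∑ i, t i ≤ S) (hK : 0 < ∑ i, k i) :
    ∏ i, t i ^ k i ≤
      (∏ i, ((k i : ℝ)) ^ (k i)) / (((∑ i, k i : ℕ) : ℝ)) ^ (∑ i, k i) * S ^ (∑ i, k i) := by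
  set K : ℕ := ∑ i, k i with hKdef
  have hKpos : (0 : ℝ) < (K : ℝ) := by exact_mod_cast hK
  set w : Fin n → ℝ := fun i => (k i : ℝ) / K with hw_def
  set z : Fin n → ℝ := fun i => if k i = 0 then 0 else (K : ℝ) * t i / (k i : ℝ) with hz_def
  have hw : ∀ i ∈ univ, 0 ≤ w i := fun i _ =>
    div_nonneg (Nat.cast_nonneg _) hKpos.le
  have hw' : ∑ i : Fin n, w i = 1 := by
    simp only [hw_def, ← Finset.sum_div]
    rw [← Nat.cast_sum, ← hKdef, div_self hKpos.ne']
  have hz : ∀ i ∈ univ, 0 ≤ z i := by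
    intro i _
    simp only [hz_def]
    split
    · exact le_rfl
    · exact div_nonneg (mul_nonneg hKpos.le (ht i)) (Nat.cast_nonneg _)
  have h := Real.geom_mean_le_arith_mean_weighted univ w z hw hw' hz
  have hrhs : ∑ i : Fin n, w i * z i ≤ S := by
    refine le_trans (Finset.sum_le_sum (fun i _ => ?_)) hsum
    by_cases h0 : k i = 0
    · simp [hw_def, hz_def, h0, ht i]
    · have hk0 : ((k i : ℝ)) ≠ 0 := by exact_mod_cast h0
      simp only [hw_def, hz_def, if_neg h0]
      rw [div_mul_div_comm]
      rw [div_le_iff₀ (by positivity)]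
      ring_nf
      nlinarith [ht i, hKpos, (Nat.cast_pos.mpr (Nat.pos_of_ne_zero h0) : (0:ℝ) < k i)]
  have hle : ∏ i : Fin n, z i ^ w i ≤ S := h.trans hrhs
  have hprodnn : 0 ≤ ∏ i : Fin n, z i ^ w i :=
    Finset.prod_nonneg fun i hi => Real.rpow_nonneg (hz i hi) _
  have hpow : (∏ i : Fin n, z i ^ w i) ^ K ≤ S ^ K := pow_le_pow_left₀ hprodnn hle K
  have hprodpow : (∏ i : Fin n, z i ^ w i) ^ K = ∏ i, z i ^ k i := by
    rw [← Finset.prod_pow]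
    refine Finset.prod_congr rfl fun i _ => ?_
    rw [← Real.rpow_natCast (z i ^ w i) K, ← Real.rpow_mul (hz i (mem_univ i)),
      hw_def]
    have : (k i : ℝ) / (K : ℝ) * (K : ℝ) = (k i : ℝ) := div_mul_cancel₀ _ hKpos.ne'
    rw [this, Real.rpow_natCast]
  have hfac : ∀ i, z i ^ k i = (K : ℝ) ^ k i * t i ^ k i / ((k i : ℝ)) ^ k i := by
    intro i
    by_cases h0 : k i = 0
    · simp [hz_def, h0]
    · simp only [hz_def, if_neg h0]
      rw [div_pow, mul_pow]
  have hzprod : ∏ i, z i ^ k i =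
      (K : ℝ) ^ K * (∏ i, t i ^ k i) / ∏ i, ((k i : ℝ)) ^ k i := by
    simp_rw [hfac]
    rw [Finset.prod_div_distrib, Finset.prod_mul_distrib, Finset.prod_pow_eq_pow_sum]
  have hkkpos : (0 : ℝ) < ∏ i, ((k i : ℝ)) ^ k i := by
    apply Finset.prod_pos
    intro i _
    by_cases h0 : k i = 0
    · simp [h0]
    · exact pow_pos (by exact_mod_cast Nat.pos_of_ne_zero h0) _
  have hKKpos : (0 : ℝ) < (K : ℝ) ^ K := pow_pos hKpos _
  have hfinal : (K : ℝ) ^ K * (∏ i, t i ^ k i) / (∏ i, ((k i : ℝ)) ^ k i) ≤ S ^ K := by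
    rw [← hzprod, ← hprodpow]; exact hpow
  rw [div_le_iff₀ hkkpos] at hfinal
  rw [div_mul_eq_mul_div, le_div_iff₀ hKKpos]
  nlinarith [hfinal]

/-- The supremum of `|z^k| = ∏ᵢ |zᵢ|^(kᵢ)` over the open Euclidean ball of radius `r` in `ℂⁿ`
equals `(k^k/|k|^|k|)^(1/2) · r^|k|` (conventions `0⁰ = 1`). -/
theorem stmt4 (n : ℕ) (k : Fin n → ℕ) (r : ℝ) (hr : 0 < r) :
    IsLUB {x : ℝ | ∃ z : EuclideanSpace ℂ (Fin n), ‖z‖ < r ∧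
        x = ∏ i, ‖z i‖ ^ (k i)}
      (Real.sqrt ((∏ i, ((k i : ℝ)) ^ (k i)) / (((∑ i, k i : ℕ) : ℝ)) ^ (∑ i, k i)) *
        r ^ (∑ i, k i)) := by
  by_cases hK0 : ∑ i, k i = 0
  · have hk : ∀ i, k i = 0 := fun i =>
      (Finset.sum_eq_zero_iff.mp hK0) i (mem_univ i)
    have hset : {x : ℝ | ∃ z : EuclideanSpace ℂ (Fin n), ‖z‖ < r ∧
        x = ∏ i, ‖z i‖ ^ (k i)} = {(1 : ℝ)} := by
      ext x
      simp only [Set.mem_setOf_eq, Set.mem_singleton_iff, hk, pow_zero,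
        Finset.prod_const_one]
      constructor
      · rintro ⟨z, _, rfl⟩; rfl
      · rintro rfl
        exact ⟨0, by simpa using hr, rfl⟩
    rw [hset]
    have : Real.sqrt ((∏ i, ((k i : ℝ)) ^ (k i)) /
        (((∑ i, k i : ℕ) : ℝ)) ^ (∑ i, k i)) * r ^ (∑ i, k i) = 1 := by
      simp [hk, hK0]
    rw [this]
    exact isLUB_singleton
  have hK : 0 < ∑ i, k i := Nat.pos_of_ne_zero hK0
  set K : ℕ := ∑ i, k i with hKdef
  have hKr : (0 : ℝ) < (K : ℝ) := by exact_mod_cast hK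
  set A : ℝ := ∏ i, ((k i : ℝ)) ^ (k i) with hAdef
  have hA0 : 0 < A := by
    apply Finset.prod_pos
    intro i _
    by_cases h0 : k i = 0
    · simp [h0]
    · exact pow_pos (by exact_mod_cast Nat.pos_of_ne_zero h0) _
  have hAK : (0:ℝ) ≤ A / (K : ℝ) ^ K := by positivity
  constructor
  · rintro x ⟨z, hzr, rfl⟩
    set t : Fin n → ℝ := fun i => ‖z i‖ ^ 2 with htdef
    have ht : ∀ i, 0 ≤ t i := fun i => sq_nonneg _
    have hnorm : ∑ i, t i = ‖z‖ ^ 2 := by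
      rw [EuclideanSpace.norm_eq, Real.sq_sqrt (by positivity)]
    have hsum : ∑ i, t i ≤ r ^ 2 := by
      rw [hnorm]
      nlinarith [norm_nonneg z]
    have hkey := key_amgm k t ht (by positivity : (0:ℝ) ≤ r ^ 2) hsum hK
    have hx : 0 ≤ ∏ i, ‖z i‖ ^ k i :=
      Finset.prod_nonneg fun i _ => pow_nonneg (norm_nonneg _) _
    have hsq : (∏ i, ‖z i‖ ^ k i) ^ 2 = ∏ i, t i ^ k i := by
      rw [← Finset.prod_pow]
      exact Finset.prod_congr rfl fun i _ => by rw [htdef, ← pow_mul, ← pow_mul, Nat.mul_comm]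
    have h2 : Real.sqrt (A / (K : ℝ) ^ K) * r ^ K =
        Real.sqrt (A / (K : ℝ) ^ K * (r ^ 2) ^ K) := by
      rw [Real.sqrt_mul hAK]
      congr 1
      rw [← pow_mul, Nat.mul_comm, pow_mul, Real.sqrt_sq (pow_nonneg hr.le _)]
    rw [h2]
    exact (Real.le_sqrt hx (by positivity)).mpr (by rw [hsq]; exact hkey)
  · intro b hb
    have hmem : ∀ s ∈ Set.Ioo (0:ℝ) r,
        Real.sqrt (A / (K : ℝ) ^ K) * s ^ K ∈ {x : ℝ | ∃ z : EuclideanSpace ℂ (Fin n),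
          ‖z‖ < r ∧ x = ∏ i, ‖z i‖ ^ (k i)} := by
      intro s hs
      obtain ⟨hs0, hsr⟩ := hs
      refine ⟨WithLp.toLp 2 (fun i => ((Real.sqrt ((k i : ℝ) / (K : ℝ)) * s : ℝ) : ℂ)), ?_, ?_⟩
      · have : ∑ i, ‖((Real.sqrt ((k i : ℝ) / (K : ℝ)) * s : ℝ) : ℂ)‖ ^ 2 = s ^ 2 := by
          have : ∀ i : Fin n, ‖((Real.sqrt ((k i : ℝ) / (K : ℝ)) * s : ℝ) : ℂ)‖ ^ 2
              = (k i : ℝ) / (K : ℝ) * s ^ 2 := by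
            intro i
            rw [Complex.norm_real, Real.norm_eq_abs, sq_abs, mul_pow,
              Real.sq_sqrt (by positivity)]
          rw [Finset.sum_congr rfl fun i _ => this i, ← Finset.sum_mul, ← Finset.sum_div,
            ← Nat.cast_sum, ← hKdef, div_self hKr.ne', one_mul]
        rw [EuclideanSpace.norm_eq]; simp only [PiLp.toLp_apply]; rw [this, Real.sqrt_sq hs0.le]
        exact hsr
      · simp only [PiLp.toLp_apply]
        have hfac : ∀ i : Fin n, ‖((Real.sqrt ((k i : ℝ) / (K : ℝ)) * s : ℝ) : ℂ)‖
            ^ k i = (Real.sqrt ((k i : ℝ) / (K : ℝ)) * s) ^ k i := by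
          intro i
          rw [Complex.norm_real, Real.norm_eq_abs, abs_of_nonneg (by positivity)]
        rw [Finset.prod_congr rfl fun i _ => hfac i]
        have hV : 0 ≤ ∏ i, (Real.sqrt ((k i : ℝ) / (K : ℝ)) * s) ^ k i :=
          Finset.prod_nonneg fun i _ => pow_nonneg (by positivity) _
        have hCs : 0 ≤ Real.sqrt (A / (K : ℝ) ^ K) * s ^ K := by positivity
        have hsqeq : (Real.sqrt (A / (K : ℝ) ^ K) * s ^ K) ^ 2
            = (∏ i, (Real.sqrt ((k i : ℝ) / (K : ℝ)) * s) ^ k i) ^ 2 := by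
          rw [mul_pow, Real.sq_sqrt hAK, ← Finset.prod_pow]
          have : ∀ i : Fin n, ((Real.sqrt ((k i : ℝ) / (K : ℝ)) * s) ^ k i) ^ 2
              = ((k i : ℝ) / (K : ℝ)) ^ k i * (s ^ 2) ^ k i := by
            intro i
            rw [← pow_mul, Nat.mul_comm, pow_mul, mul_pow,
              Real.sq_sqrt (by positivity), mul_pow]
          rw [Finset.prod_congr rfl fun i _ => this i, Finset.prod_mul_distrib]
          simp_rw [div_pow]
          rw [Finset.prod_div_distrib, Finset.prod_pow_eq_pow_sum,
            Finset.prod_pow_eq_pow_sum, ← hKdef, ← hAdef, ← pow_mul,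
            Nat.mul_comm K 2, pow_mul]
        calc Real.sqrt (A / (K : ℝ) ^ K) * s ^ K
            = Real.sqrt ((Real.sqrt (A / (K : ℝ) ^ K) * s ^ K) ^ 2) :=
              (Real.sqrt_sq hCs).symm
          _ = Real.sqrt ((∏ i, (Real.sqrt ((k i : ℝ) / (K : ℝ)) * s) ^ k i) ^ 2) := by
              rw [hsqeq]
          _ = ∏ i, (Real.sqrt ((k i : ℝ) / (K : ℝ)) * s) ^ k i := Real.sqrt_sq hV
    have hub : ∀ s ∈ Set.Ioo (0:ℝ) r, Real.sqrt (A / (K : ℝ) ^ K) * s ^ K ≤ b :=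
      fun s hs => hb (hmem s hs)
    have hcl : r ∈ closure (Set.Ioo 0 r) := by
      rw [closure_Ioo hr.ne]
      exact ⟨hr.le, le_rfl⟩
    haveI := mem_closure_iff_nhdsWithin_neBot.mp hcl
    have htend : Filter.Tendsto (fun s => Real.sqrt (A / (K : ℝ) ^ K) * s ^ K)
        (nhdsWithin r (Set.Ioo 0 r)) (nhds (Real.sqrt (A / (K : ℝ) ^ K) * r ^ K)) :=
      ((continuous_const.mul (continuous_pow K)).tendsto r).mono_left nhdsWithin_le_nhds
    exact le_of_tendsto htend (eventually_nhdsWithin_of_forall hub)
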